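/- Let Δ be a simplicial complex on vertex set [n] with Stanley–Reisner ideal I_Δ over a field of characteristic zero, and let Δ^{r} be the simplicial complex whose faces are the unions of r faces of Δ. Then the r-th secant ideal I_Δ^{{r}} = I_Δ * ⋯ * I_Δ (r-fold join) equals the Stanley–Reisner ideal of Δ^{r}. -/

import Mathlib

open MvPolynomial

/-- The join `I * J` of two ideals in `K[x_1,...,x_n]`: the elimination ideal
`(I(y) + J(z) + ⟨y_i + z_i - x_i⟩) ∩ K[x]`, realized in the polynomial ring on
`Fin n ⊕ (Fin n ⊕ Fin n)` where `Sum.inl` are the `x`-variables, `Sum.inr ∘ Sum.inl`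
the `y`-variables and `Sum.inr ∘ Sum.inr` the `z`-variables. -/
noncomputable def joinIdeal {K : Type*} [Field K] {n : ℕ}
    (I J : Ideal (MvPolynomial (Fin n) K)) : Ideal (MvPolynomial (Fin n) K) :=
  Ideal.comap (rename (Sum.inl : Fin n → Fin n ⊕ (Fin n ⊕ Fin n)))
    (Ideal.map (rename (fun i : Fin n => (Sum.inr (Sum.inl i) : Fin n ⊕ (Fin n ⊕ Fin n)))) I ⊔
     Ideal.map (rename (fun i : Fin n => (Sum.inr (Sum.inr i) : Fin n ⊕ (Fin n ⊕ Fin n)))) J ⊔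
     Ideal.span {p : MvPolynomial (Fin n ⊕ (Fin n ⊕ Fin n)) K | ∃ i : Fin n,
       p = X (Sum.inr (Sum.inl i)) + X (Sum.inr (Sum.inr i)) - X (Sum.inl i)})

/-- The `r`-th secant ideal `I^{r}`, the `r`-fold join of `I` with itself.
(The `0`-th secant is the irrelevant maximal ideal `⟨x_1,...,x_n⟩`, the identity for join.) -/
noncomputable def secantIdeal {K : Type*} [Field K] {n : ℕ}
    (I : Ideal (MvPolynomial (Fin n) K)) : ℕ → Ideal (MvPolynomial (Fin n) K)
  | 0 => Ideal.span (Set.range X)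
  | 1 => I
  | (r + 2) => joinIdeal (secantIdeal I (r + 1)) I

/-- The Stanley–Reisner ideal of a family `Δ` of subsets of `[n]`: generated by the
squarefree monomials `∏_{i ∈ V} x_i` for `V ∉ Δ`. -/
noncomputable def srIdeal (K : Type*) [Field K] {n : ℕ} (Δ : Set (Finset (Fin n))) :
    Ideal (MvPolynomial (Fin n) K) :=
  Ideal.span {p : MvPolynomial (Fin n) K | ∃ V : Finset (Fin n), V ∉ Δ ∧ p = ∏ i ∈ V, X i}

section Stmt5Aux

variable {K : Type*} [Field K] {n : ℕ}

/-- The substitution `x_i ↦ y_i + z_i`. -/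
noncomputable def joinPhi (K : Type*) [Field K] (n : ℕ) :
    MvPolynomial (Fin n) K →ₐ[K] MvPolynomial (Fin n ⊕ Fin n) K :=
  aeval fun i => X (Sum.inl i) + X (Sum.inr i)

/-- `x_i ↦ y_i + z_i`, `y_i ↦ y_i`, `z_i ↦ z_i`. -/
noncomputable def joinPsi (K : Type*) [Field K] (n : ℕ) :
    MvPolynomial (Fin n ⊕ (Fin n ⊕ Fin n)) K →ₐ[K] MvPolynomial (Fin n ⊕ Fin n) K :=
  aeval (Sum.elim (fun i => X (Sum.inl i) + X (Sum.inr i)) X)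

lemma sub_apply_mem {σ : Type*} (f : MvPolynomial σ K →ₐ[K] MvPolynomial σ K)
    (L : Ideal (MvPolynomial σ K)) (hX : ∀ v, X v - f (X v) ∈ L) (q : MvPolynomial σ K) :
    q - f q ∈ L := by
  induction q using MvPolynomial.induction_on with
  | C a =>
      have : f (C a) = C a := f.commutes a
      simp [this]
  | add p q hp hq =>
      rw [map_add]
      have h := L.add_mem hp hq
      convert h using 1; ring
  | mul_X p v hp =>
      rw [map_mul]
      have h : p * X v - f p * f (X v) = (p - f p) * X v + f p * (X v - f (X v)) := by ring
      rw [h]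
      exact L.add_mem (L.mul_mem_right _ hp) (L.mul_mem_left _ (hX v))

lemma rename_map_rename {σ τ υ : Type*} (f : σ → τ) (g : τ → υ)
    (I : Ideal (MvPolynomial σ K)) :
    Ideal.map (rename g) (Ideal.map (rename f) I) = Ideal.map (rename (g ∘ f)) I := by
  apply le_antisymm
  · rw [Ideal.map_le_iff_le_comap, Ideal.map_le_iff_le_comap]
    intro x hx
    simp only [Ideal.mem_comap]
    rw [rename_rename]
    exact Ideal.mem_map_of_mem _ hx
  · rw [Ideal.map_le_iff_le_comap]
    intro x hx
    simp only [Ideal.mem_comap]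
    rw [← rename_rename]
    exact Ideal.mem_map_of_mem _ (Ideal.mem_map_of_mem _ hx)

lemma joinIdeal_eq (I J : Ideal (MvPolynomial (Fin n) K)) :
    joinIdeal I J = Ideal.comap (joinPhi K n)
      (Ideal.map (rename (Sum.inl : Fin n → Fin n ⊕ Fin n)) I ⊔
       Ideal.map (rename (Sum.inr : Fin n → Fin n ⊕ Fin n)) J) := by
  classical
  set M := Ideal.map (rename (Sum.inl : Fin n → Fin n ⊕ Fin n)) I ⊔
       Ideal.map (rename (Sum.inr : Fin n → Fin n ⊕ Fin n)) J with hM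
  have hpsi1 : ∀ q : MvPolynomial (Fin n) K,
      joinPsi K n (rename (fun i : Fin n => (Sum.inr (Sum.inl i) : Fin n ⊕ (Fin n ⊕ Fin n))) q)
        = rename Sum.inl q := by
    intro q; rw [joinPsi, aeval_rename]; congr 1; ext i; simp
  have hpsi2 : ∀ q : MvPolynomial (Fin n) K,
      joinPsi K n (rename (fun i : Fin n => (Sum.inr (Sum.inr i) : Fin n ⊕ (Fin n ⊕ Fin n))) q)
        = rename Sum.inr q := by
    intro q; rw [joinPsi, aeval_rename]; congr 1; ext i; simp
  have hpsi3 : ∀ q : MvPolynomial (Fin n) K,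
      joinPsi K n (rename (Sum.inl : Fin n → Fin n ⊕ (Fin n ⊕ Fin n)) q) = joinPhi K n q := by
    intro q; rw [joinPsi, aeval_rename]; rfl
  apply le_antisymm
  · intro p hp
    simp only [joinIdeal, Ideal.mem_comap] at hp
    have hB : (Ideal.map (rename (fun i : Fin n => (Sum.inr (Sum.inl i) : Fin n ⊕ (Fin n ⊕ Fin n)))) I ⊔
     Ideal.map (rename (fun i : Fin n => (Sum.inr (Sum.inr i) : Fin n ⊕ (Fin n ⊕ Fin n)))) J ⊔
     Ideal.span {p : MvPolynomial (Fin n ⊕ (Fin n ⊕ Fin n)) K | ∃ i : Fin n,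
       p = X (Sum.inr (Sum.inl i)) + X (Sum.inr (Sum.inr i)) - X (Sum.inl i)})
        ≤ Ideal.comap (joinPsi K n) M := by
      refine sup_le (sup_le ?_ ?_) ?_
      · rw [Ideal.map_le_iff_le_comap]
        intro q hq
        show joinPsi K n (rename _ q) ∈ M
        rw [hpsi1]
        exact Ideal.mem_sup_left (Ideal.mem_map_of_mem _ hq)
      · rw [Ideal.map_le_iff_le_comap]
        intro q hq
        show joinPsi K n (rename _ q) ∈ M
        rw [hpsi2]
        exact Ideal.mem_sup_right (Ideal.mem_map_of_mem _ hq)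
      · rw [Ideal.span_le]
        rintro q ⟨i, rfl⟩
        show joinPsi K n _ ∈ M
        rw [map_sub, map_add]
        simp only [joinPsi, aeval_X, Sum.elim_inl, Sum.elim_inr]
        ring_nf
        exact M.zero_mem
    have := hB hp
    rw [Ideal.mem_comap, hpsi3] at this
    exact this
  · intro p hp
    rw [Ideal.mem_comap] at hp
    simp only [joinIdeal, Ideal.mem_comap]
    set B := (Ideal.map (rename (fun i : Fin n => (Sum.inr (Sum.inl i) : Fin n ⊕ (Fin n ⊕ Fin n)))) I ⊔
     Ideal.map (rename (fun i : Fin n => (Sum.inr (Sum.inr i) : Fin n ⊕ (Fin n ⊕ Fin n)))) J ⊔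
     Ideal.span {p : MvPolynomial (Fin n ⊕ (Fin n ⊕ Fin n)) K | ∃ i : Fin n,
       p = X (Sum.inr (Sum.inl i)) + X (Sum.inr (Sum.inr i)) - X (Sum.inl i)}) with hB
    set τ : MvPolynomial (Fin n ⊕ (Fin n ⊕ Fin n)) K →ₐ[K] MvPolynomial (Fin n ⊕ (Fin n ⊕ Fin n)) K :=
      (rename (Sum.inr : (Fin n ⊕ Fin n) → Fin n ⊕ (Fin n ⊕ Fin n))).comp (joinPsi K n) with hτ
    have key : ∀ q, q - τ q ∈ B := by
      intro q
      refine sub_apply_mem τ B (fun v => ?_) q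
      have hL : Ideal.span {p : MvPolynomial (Fin n ⊕ (Fin n ⊕ Fin n)) K | ∃ i : Fin n,
          p = X (Sum.inr (Sum.inl i)) + X (Sum.inr (Sum.inr i)) - X (Sum.inl i)} ≤ B :=
        le_sup_right
      match v with
      | Sum.inl i =>
          have hXv : τ (X (Sum.inl i) : MvPolynomial (Fin n ⊕ (Fin n ⊕ Fin n)) K)
              = X (Sum.inr (Sum.inl i)) + X (Sum.inr (Sum.inr i)) := by
            simp [hτ, joinPsi]
          rw [hXv]
          have hg : (X (Sum.inr (Sum.inl i)) + X (Sum.inr (Sum.inr i)) - X (Sum.inl i) :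
              MvPolynomial (Fin n ⊕ (Fin n ⊕ Fin n)) K) ∈ B :=
            hL (Ideal.subset_span ⟨i, rfl⟩)
          have := B.neg_mem hg
          convert this using 1; ring
      | Sum.inr w =>
          have hXv : τ (X (Sum.inr w) : MvPolynomial (Fin n ⊕ (Fin n ⊕ Fin n)) K) = X (Sum.inr w) := by
            simp [hτ, joinPsi]
          rw [hXv, sub_self]
          exact B.zero_mem
    have hτp : τ (rename (Sum.inl : Fin n → Fin n ⊕ (Fin n ⊕ Fin n)) p) ∈ B := by
      have h1 : τ (rename (Sum.inl : Fin n → Fin n ⊕ (Fin n ⊕ Fin n)) p)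
          = rename (Sum.inr : (Fin n ⊕ Fin n) → Fin n ⊕ (Fin n ⊕ Fin n)) (joinPhi K n p) := by
        rw [hτ, AlgHom.comp_apply, hpsi3]
      rw [h1]
      have h2 : rename (Sum.inr : (Fin n ⊕ Fin n) → Fin n ⊕ (Fin n ⊕ Fin n)) (joinPhi K n p)
          ∈ Ideal.map (rename (Sum.inr : (Fin n ⊕ Fin n) → Fin n ⊕ (Fin n ⊕ Fin n))) M :=
        Ideal.mem_map_of_mem _ hp
      refine (?_ : Ideal.map _ M ≤ B) h2
      rw [hM, Ideal.map_sup, rename_map_rename, rename_map_rename]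
      exact sup_le (le_sup_of_le_left (le_sup_of_le_left le_rfl))
        (le_sup_of_le_left (le_sup_of_le_right le_rfl))
    have := B.add_mem (key (rename (Sum.inl : Fin n → Fin n ⊕ (Fin n ⊕ Fin n)) p)) hτp
    simpa using this


lemma prod_X_eq {σ : Type*} [DecidableEq σ] (V : Finset σ) :
    (∏ i ∈ V, (X i : MvPolynomial σ K)) = monomial (∑ i ∈ V, Finsupp.single i 1) 1 := by
  induction V using Finset.cons_induction with
  | empty => simp
  | cons a s ha ih =>
      rw [Finset.prod_cons, Finset.sum_cons, ih, X, monomial_mul, one_mul]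

lemma ind_apply {σ : Type*} [DecidableEq σ] (V : Finset σ) (a : σ) :
    (∑ i ∈ V, Finsupp.single i 1 : σ →₀ ℕ) a = if a ∈ V then 1 else 0 := by
  rw [Finsupp.finset_sum_apply]
  simp [Finsupp.single_apply, Finset.sum_ite_eq' V a (fun _ => 1)]

lemma ind_le {σ : Type*} [DecidableEq σ] (a : σ →₀ ℕ) :
    (∑ i ∈ a.support, Finsupp.single i 1 : σ →₀ ℕ) ≤ a := by
  intro s
  rw [ind_apply]
  split_ifs with h
  · exact Nat.one_le_iff_ne_zero.2 (Finsupp.mem_support_iff.1 h)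
  · exact Nat.zero_le _

lemma monomial_mem_srIdeal {Δ'' : Set (Finset (Fin n))} {a : Fin n →₀ ℕ} (c : K)
    (h : a.support ∉ Δ'') : monomial a c ∈ srIdeal K Δ'' := by
  classical
  have hgen : (∏ i ∈ a.support, (X i : MvPolynomial (Fin n) K)) ∈ srIdeal K Δ'' :=
    Ideal.subset_span ⟨a.support, h, rfl⟩
  have heq : (monomial a c : MvPolynomial (Fin n) K)
      = monomial (a - ∑ i ∈ a.support, Finsupp.single i 1) c * ∏ i ∈ a.support, X i := by
    rw [prod_X_eq, monomial_mul, mul_one, tsub_add_cancel_of_le (ind_le a)]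
  rw [heq]
  exact Ideal.mul_mem_left _ _ hgen

lemma srIdeal_eval_zero {Δ'' : Set (Finset (Fin n))} (w : Fin n → K)
    (hw : ∀ V : Finset (Fin n), V ∉ Δ'' → ∃ i ∈ V, w i = 0) :
    srIdeal K Δ'' ≤ RingHom.ker (eval w) := by
  rw [srIdeal, Ideal.span_le]
  rintro q ⟨V, hV, rfl⟩
  obtain ⟨i, hiV, hwi⟩ := hw V hV
  simp only [SetLike.mem_coe, RingHom.mem_ker, map_prod, eval_X]
  exact Finset.prod_eq_zero hiV hwi

lemma eval_aeval {σ τ : Type*} (q : τ → K) (h : σ → MvPolynomial τ K)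
    (f : MvPolynomial σ K) :
    eval q (aeval h f) = eval (fun i => eval q (h i)) f := by
  induction f using MvPolynomial.induction_on with
  | C a => simp
  | add p₁ p₂ h₁ h₂ => rw [map_add, map_add, h₁, h₂, ← map_add]
  | mul_X p v hp => rw [map_mul, map_mul, hp, aeval_X, map_mul, eval_X]

lemma eq_zero_of_vanish [CharZero K] {Δ'' : Set (Finset (Fin n))} (f : MvPolynomial (Fin n) K)
    (hsupp : ∀ a ∈ f.support, (a.support : Finset (Fin n)) ∈ Δ'')
    (hvan : ∀ H : Finset (Fin n), H ∈ Δ'' →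
      ∀ q : Fin n → K, eval (fun i => if i ∈ H then q i else 0) f = 0) :
    f = 0 := by
  classical
  ext a
  rw [coeff_zero]
  by_cases ha : a ∈ f.support
  swap
  · exact notMem_support_iff.1 ha
  have hH : a.support ∈ Δ'' := hsupp a ha
  set H := a.support with hHdef
  set g : MvPolynomial (Fin n) K :=
    aeval (fun i => if i ∈ H then (X i : MvPolynomial (Fin n) K) else 0) f with hg
  have hg0 : g = 0 := by
    apply MvPolynomial.funext
    intro x
    rw [hg, eval_aeval, map_zero]
    have : (fun i => eval x (if i ∈ H then (X i : MvPolynomial (Fin n) K) else 0))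
        = fun i => if i ∈ H then x i else 0 := by
      funext i; split_ifs <;> simp
    rw [this]
    exact hvan H hH x
  have hcoeff : coeff a g = coeff a f := by
    conv_rhs => rw [← support_sum_monomial_coeff f]
    rw [hg]
    conv_lhs => rw [← support_sum_monomial_coeff f]
    rw [map_sum, coeff_sum, coeff_sum]
    refine Finset.sum_congr rfl (fun b hb => ?_)
    by_cases hbH : ↑b.support ⊆ H
    · have : aeval (fun i => if i ∈ H then (X i : MvPolynomial (Fin n) K) else 0)
          (monomial b (coeff b f)) = monomial b (coeff b f) := by
        rw [aeval_monomial, algebraMap_eq]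
        have hpr : (b.prod fun i k => (if i ∈ H then (X i : MvPolynomial (Fin n) K) else 0) ^ k)
            = monomial b 1 := by
          rw [← prod_X_pow_eq_monomial, Finsupp.prod]
          refine Finset.prod_congr rfl (fun i hi => ?_)
          rw [if_pos (hbH hi)]
        rw [hpr, C_mul_monomial, mul_one]
      rw [this]
    · have hex : ∃ i ∈ b.support, i ∉ H := by
        by_contra hc
        push_neg at hc
        exact hbH hc
      obtain ⟨i, hib, hiH⟩ := hex
      have : aeval (fun i => if i ∈ H then (X i : MvPolynomial (Fin n) K) else 0)
          (monomial b (coeff b f)) = 0 := by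
        rw [aeval_monomial, Finsupp.prod]
        have : (∏ j ∈ b.support,
            (if j ∈ H then (X j : MvPolynomial (Fin n) K) else 0) ^ b j) = 0 := by
          apply Finset.prod_eq_zero hib
          rw [if_neg hiH]
          exact zero_pow (Finsupp.mem_support_iff.1 hib)
        rw [this, mul_zero]
      rw [this, coeff_zero, coeff_monomial]
      split_ifs with hab
      · exfalso
        exact hbH (hab ▸ Finset.Subset.refl _)
      · rfl
  rw [← hcoeff, hg0, coeff_zero]


/-- The join of two families: unions of a face of each. -/
def starC (Δ' Δ : Set (Finset (Fin n))) : Set (Finset (Fin n)) :=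
  {F | ∃ A ∈ Δ', ∃ B ∈ Δ, F = A ∪ B}

lemma eval_M_zero {Δ' Δ : Set (Finset (Fin n))}
    (hd1 : ∀ s ∈ Δ', ∀ t, t ⊆ s → t ∈ Δ') (hd2 : ∀ s ∈ Δ, ∀ t, t ⊆ s → t ∈ Δ)
    {F G : Finset (Fin n)} (hF : F ∈ Δ') (hG : G ∈ Δ) (w : (Fin n ⊕ Fin n) → K)
    (hwF : ∀ i ∉ F, w (Sum.inl i) = 0) (hwG : ∀ i ∉ G, w (Sum.inr i) = 0) :
    Ideal.map (rename (Sum.inl : Fin n → Fin n ⊕ Fin n)) (srIdeal K Δ') ⊔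
      Ideal.map (rename (Sum.inr : Fin n → Fin n ⊕ Fin n)) (srIdeal K Δ)
      ≤ RingHom.ker (eval w) := by
  refine sup_le ?_ ?_
  · rw [Ideal.map_le_iff_le_comap]
    refine le_trans (srIdeal_eval_zero (w ∘ Sum.inl) ?_) ?_
    · intro V hV
      have : ¬ V ⊆ F := fun hc => hV (hd1 F hF V hc)
      obtain ⟨i, hiV, hiF⟩ := Finset.not_subset.1 this
      exact ⟨i, hiV, hwF i hiF⟩
    · intro q hq
      simp only [Ideal.mem_comap, RingHom.mem_ker] at *
      rw [eval_rename]
      exact hq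
  · rw [Ideal.map_le_iff_le_comap]
    refine le_trans (srIdeal_eval_zero (w ∘ Sum.inr) ?_) ?_
    · intro V hV
      have : ¬ V ⊆ G := fun hc => hV (hd2 G hG V hc)
      obtain ⟨i, hiV, hiG⟩ := Finset.not_subset.1 this
      exact ⟨i, hiV, hwG i hiG⟩
    · intro q hq
      simp only [Ideal.mem_comap, RingHom.mem_ker] at *
      rw [eval_rename]
      exact hq

lemma sr_le_comap (Δ' Δ : Set (Finset (Fin n))) :
    srIdeal K (starC Δ' Δ) ≤ Ideal.comap (joinPhi K n)
      (Ideal.map (rename (Sum.inl : Fin n → Fin n ⊕ Fin n)) (srIdeal K Δ') ⊔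
       Ideal.map (rename (Sum.inr : Fin n → Fin n ⊕ Fin n)) (srIdeal K Δ)) := by
  classical
  rw [srIdeal, Ideal.span_le]
  rintro q ⟨V, hV, rfl⟩
  simp only [SetLike.mem_coe, Ideal.mem_comap]
  rw [map_prod]
  have hphiX : ∀ i : Fin n, joinPhi K n (X i)
      = X (Sum.inl i) + X (Sum.inr i) := fun i => aeval_X _ i
  have hprod : (∏ i ∈ V, joinPhi K n (X i))
      = ∏ i ∈ V, ((X (Sum.inl i) : MvPolynomial (Fin n ⊕ Fin n) K) + X (Sum.inr i)) :=
    Finset.prod_congr rfl (fun i _ => hphiX i)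
  rw [hprod, Finset.prod_add]
  refine Ideal.sum_mem _ (fun A hA => ?_)
  have hAV : A ⊆ V := Finset.mem_powerset.1 hA
  by_cases hAΔ : A ∈ Δ'
  · have hBΔ : V \ A ∉ Δ := by
      intro hB
      exact hV ⟨A, hAΔ, V \ A, hB, (Finset.union_sdiff_of_subset hAV).symm⟩
    have hz : (∏ i ∈ V \ A, (X (Sum.inr i) : MvPolynomial (Fin n ⊕ Fin n) K))
        ∈ Ideal.map (rename (Sum.inr : Fin n → Fin n ⊕ Fin n)) (srIdeal K Δ) := by
      have : (∏ i ∈ V \ A, (X (Sum.inr i) : MvPolynomial (Fin n ⊕ Fin n) K))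
          = rename (Sum.inr : Fin n → Fin n ⊕ Fin n) (∏ i ∈ V \ A, X i) := by
        rw [map_prod]
        exact Finset.prod_congr rfl (fun i _ => (rename_X _ i).symm)
      rw [this]
      exact Ideal.mem_map_of_mem _ (Ideal.subset_span ⟨V \ A, hBΔ, rfl⟩)
    exact Ideal.mem_sup_right (Ideal.mul_mem_left _ _ hz)
  · have hy : (∏ i ∈ A, (X (Sum.inl i) : MvPolynomial (Fin n ⊕ Fin n) K))
        ∈ Ideal.map (rename (Sum.inl : Fin n → Fin n ⊕ Fin n)) (srIdeal K Δ') := by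
      have : (∏ i ∈ A, (X (Sum.inl i) : MvPolynomial (Fin n ⊕ Fin n) K))
          = rename (Sum.inl : Fin n → Fin n ⊕ Fin n) (∏ i ∈ A, X i) := by
        rw [map_prod]
        exact Finset.prod_congr rfl (fun i _ => (rename_X _ i).symm)
      rw [this]
      exact Ideal.mem_map_of_mem _ (Ideal.subset_span ⟨A, hAΔ, rfl⟩)
    exact Ideal.mem_sup_left (Ideal.mul_mem_right _ _ hy)

lemma join_sr [CharZero K] (Δ' Δ : Set (Finset (Fin n)))
    (hd1 : ∀ s ∈ Δ', ∀ t, t ⊆ s → t ∈ Δ') (hd2 : ∀ s ∈ Δ, ∀ t, t ⊆ s → t ∈ Δ) :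
    joinIdeal (srIdeal K Δ') (srIdeal K Δ) = srIdeal K (starC Δ' Δ) := by
  classical
  rw [joinIdeal_eq]
  set M := Ideal.map (rename (Sum.inl : Fin n → Fin n ⊕ Fin n)) (srIdeal K Δ') ⊔
       Ideal.map (rename (Sum.inr : Fin n → Fin n ⊕ Fin n)) (srIdeal K Δ) with hM
  apply le_antisymm
  swap
  · exact sr_le_comap Δ' Δ
  intro p hp
  rw [Ideal.mem_comap] at hp
  set good : (Fin n →₀ ℕ) → Prop := fun a => a.support ∈ starC Δ' Δ with hgood
  set f₀ : MvPolynomial (Fin n) K :=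
    ∑ a ∈ p.support.filter good, monomial a (coeff a p) with hf₀
  set f₁ : MvPolynomial (Fin n) K :=
    ∑ a ∈ p.support.filter (fun a => ¬ good a), monomial a (coeff a p) with hf₁
  have hsplit : p = f₀ + f₁ := by
    rw [hf₀, hf₁, Finset.sum_filter_add_sum_filter_not, support_sum_monomial_coeff]
  have hf₁mem : f₁ ∈ srIdeal K (starC Δ' Δ) :=
    Ideal.sum_mem _ (fun a ha => monomial_mem_srIdeal _ (Finset.mem_filter.1 ha).2)
  have hphif₁ : joinPhi K n f₁ ∈ M := sr_le_comap Δ' Δ hf₁mem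
  have hphif₀ : joinPhi K n f₀ ∈ M := by
    have : joinPhi K n f₀ = joinPhi K n p - joinPhi K n f₁ := by
      rw [hsplit, map_add]; ring
    rw [this]
    exact M.sub_mem hp hphif₁
  have hf₀0 : f₀ = 0 := by
    refine eq_zero_of_vanish (Δ'' := starC Δ' Δ) f₀ ?_ ?_
    · intro a ha
      have := Finset.mem_coe.2 ha
      have hsub : f₀.support ⊆ p.support.filter good := by
        refine le_trans support_sum ?_
        intro x hx
        rw [Finset.mem_biUnion] at hx
        obtain ⟨b, hb, hxb⟩ := hx
        have := support_monomial_subset hxb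
        rw [Finset.mem_singleton] at this
        rwa [this]
      exact (Finset.mem_filter.1 (hsub ha)).2
    · rintro H ⟨F, hF, G, hG, rfl⟩ q
      set w : (Fin n ⊕ Fin n) → K := Sum.elim (fun i => if i ∈ F then q i else 0)
        (fun i => if i ∈ G ∧ i ∉ F then q i else 0) with hw
      have hker := eval_M_zero hd1 hd2 hF hG w
        (fun i hi => by simp [hw, hi]) (fun i hi => by simp [hw, hi]) hphif₀
      rw [RingHom.mem_ker] at hker
      rw [show (joinPhi K n) f₀ = aeval (fun i => X (Sum.inl i) + X (Sum.inr i)) f₀ from rfl,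
        eval_aeval] at hker
      have hfun : (fun i => eval w ((X (Sum.inl i) : MvPolynomial (Fin n ⊕ Fin n) K)
          + X (Sum.inr i))) = fun i => if i ∈ F ∪ G then q i else 0 := by
        funext i
        simp only [map_add, eval_X, hw, Sum.elim_inl, Sum.elim_inr]
        by_cases hiF : i ∈ F <;> by_cases hiG : i ∈ G <;>
          simp [hiF, hiG, Finset.mem_union]
      rw [hfun] at hker
      exact hker
  rw [hsplit, hf₀0, zero_add]
  exact hf₁mem


def unions (r : ℕ) (Δ : Set (Finset (Fin n))) : Set (Finset (Fin n)) :=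
  {F | ∃ g : Fin r → Finset (Fin n), (∀ t, g t ∈ Δ) ∧ F = Finset.univ.biUnion g}

lemma unions_one (Δ : Set (Finset (Fin n))) : unions 1 Δ = Δ := by
  ext F
  constructor
  · rintro ⟨g, hg, rfl⟩
    have : Finset.univ.biUnion g = g 0 := by
      ext x
      simp [Finset.mem_biUnion, Fin.exists_fin_one]
    rw [this]
    exact hg 0
  · intro hF
    refine ⟨fun _ => F, fun _ => hF, ?_⟩
    ext x
    simp [Finset.mem_biUnion]

lemma unions_down {Δ : Set (Finset (Fin n))} (hdown : ∀ s ∈ Δ, ∀ t, t ⊆ s → t ∈ Δ) (r : ℕ) :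
    ∀ s ∈ unions r Δ, ∀ t, t ⊆ s → t ∈ unions r Δ := by
  rintro s ⟨g, hg, rfl⟩ t ht
  refine ⟨fun i => t ∩ g i, fun i => hdown _ (hg i) _ Finset.inter_subset_right, ?_⟩
  ext x
  simp only [Finset.mem_biUnion, Finset.mem_univ, true_and, Finset.mem_inter]
  constructor
  · intro hx
    have := ht hx
    rw [Finset.mem_biUnion] at this
    obtain ⟨i, _, hi⟩ := this
    exact ⟨i, hx, hi⟩
  · rintro ⟨i, hx, _⟩
    exact hx

lemma biUnion_cons {r : ℕ} (B : Finset (Fin n)) (g : Fin r → Finset (Fin n)) :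
    Finset.univ.biUnion (Fin.cons B g : Fin (r + 1) → Finset (Fin n))
      = B ∪ Finset.univ.biUnion g := by
  ext x
  simp only [Finset.mem_biUnion, Finset.mem_univ, true_and, Finset.mem_union]
  rw [Fin.exists_fin_succ]
  simp [Fin.cons_zero, Fin.cons_succ]

lemma starC_unions (Δ : Set (Finset (Fin n))) (r : ℕ) :
    starC (unions (r + 1) Δ) Δ = unions (r + 2) Δ := by
  ext F
  constructor
  · rintro ⟨A, ⟨g, hg, rfl⟩, B, hB, rfl⟩
    refine ⟨Fin.cons B g, ?_, ?_⟩
    · intro t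
      refine Fin.cases ?_ ?_ t
      · rw [Fin.cons_zero]; exact hB
      · intro i; rw [Fin.cons_succ]; exact hg i
    · rw [biUnion_cons, Finset.union_comm]
  · rintro ⟨g', hg', rfl⟩
    refine ⟨Finset.univ.biUnion (Fin.tail g'), ⟨Fin.tail g', fun i => hg' _, rfl⟩,
      g' 0, hg' 0, ?_⟩
    conv_lhs => rw [← Fin.cons_self_tail g']
    rw [biUnion_cons, Finset.union_comm]

end Stmt5Aux

/-- for a simplicial complex `Δ` on `[n]` and `r ≥ 1`, in characteristic zero,
the `r`-th secant of the Stanley–Reisner ideal of `Δ` is the Stanley–Reisner ideal of the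
complex `Δ^{r}` whose faces are the unions of `r` faces of `Δ`. -/
theorem stmt_5 (K : Type*) [Field K] [CharZero K] (n r : ℕ) (hr : 1 ≤ r)
    (Δ : Set (Finset (Fin n))) (hdown : ∀ s ∈ Δ, ∀ t, t ⊆ s → t ∈ Δ) (hne : ∅ ∈ Δ) :
    secantIdeal (srIdeal K Δ) r =
      srIdeal K {F : Finset (Fin n) |
        ∃ g : Fin r → Finset (Fin n), (∀ t, g t ∈ Δ) ∧ F = Finset.univ.biUnion g} := by
  obtain ⟨s, rfl⟩ : ∃ s, r = s + 1 := ⟨r - 1, (Nat.succ_pred_eq_of_pos hr).symm⟩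
  clear hr
  induction s with
  | zero =>
      show secantIdeal (srIdeal K Δ) 1 = srIdeal K (unions 1 Δ)
      rw [show secantIdeal (srIdeal K Δ) 1 = srIdeal K Δ by simp [secantIdeal], unions_one]
  | succ s ih =>
      show secantIdeal (srIdeal K Δ) (s + 2) = srIdeal K (unions (s + 2) Δ)
      have h1 : secantIdeal (srIdeal K Δ) (s + 2)
          = joinIdeal (secantIdeal (srIdeal K Δ) (s + 1)) (srIdeal K Δ) := by
        simp [secantIdeal]
      have h2 : secantIdeal (srIdeal K Δ) (s + 1) = srIdeal K (unions (s + 1) Δ) := ih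
      rw [h1, h2, join_sr _ _ (unions_down hdown (s + 1)) hdown, starC_unions]
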